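/- Let γ̃^i_j satisfy (★) on U and let Γ^i_{jk} be the associated Christoffel symbols. For z ∈ ℂ set Γ(z)^i_{jk} := Γ^i_{jk} + z·δ^i_j·δ^i_k. Then for every z ∈ ℂ the connection with Christoffel symbols Γ(z) is torsionless and flat and the vector field e = Σ_i ∂/∂u^i is parallel; concretely, for all indices i,j,k,l and all z ∈ ℂ: (i) Γ(z)^i_{jk} = Γ(z)^i_{kj}; (ii) ∂_k Γ(z)^i_{lj} − ∂_l Γ(z)^i_{kj} + Σ_{m=1}^N ( Γ(z)^i_{km} Γ(z)^m_{lj} − Γ(z)^i_{lm} Γ(z)^m_{kj} ) = 0; (iii) Σ_{j=1}^N Γ^i_{kj} = 0. -/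

import Mathlib

noncomputable section

variable {N : ℕ}

/-- The partial derivative `∂_k = ∂/∂u^k` of a function of `N` complex variables. -/
def pder (k : Fin N) (f : (Fin N → ℂ) → ℂ) : (Fin N → ℂ) → ℂ :=
  fun u => fderiv ℂ f u (Pi.single k 1)

/-- Kronecker delta. -/
def kron (i j : Fin N) : ℂ := if i = j then 1 else 0

/-- The system (★) for the functions `γ̃^i_j` (`i ≠ j`) on `U`. -/
def StarSystem (U : Set (Fin N → ℂ)) (γ : Fin N → Fin N → (Fin N → ℂ) → ℂ) : Prop :=
  (∀ i j k : Fin N, i ≠ j → j ≠ k → i ≠ k → ∀ u ∈ U,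
      pder k (γ i j) u =
        -(γ i j u * γ i k u) + γ i j u * γ j k u + γ i k u * γ k j u) ∧
  (∀ i j : Fin N, i ≠ j → ∀ u ∈ U, ∑ k, pder k (γ i j) u = 0)

/-- Christoffel symbols `Γ^i_{jk}` of the flat F-manifold connection in canonical coordinates,
associated to a solution `γ̃` of (★):  `Γ^i_{jk} = 0` for pairwise distinct `i,j,k`;
`Γ^i_{ij} = Γ^i_{ji} = γ̃^i_j` and `Γ^i_{jj} = −γ̃^i_j` for `i ≠ j`;
`Γ^i_{ii} = −Σ_{k≠i} γ̃^i_k`. -/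
def Gam (γ : Fin N → Fin N → (Fin N → ℂ) → ℂ) (i j k : Fin N) : (Fin N → ℂ) → ℂ :=
  if i = j ∧ i = k then fun u => -∑ l ∈ Finset.univ.erase i, γ i l u
  else if i = j then γ i k
  else if i = k then γ i j
  else if j = k then fun u => -(γ i j u)
  else 0

/-- The family of Christoffel symbols `Γ(z)^i_{jk} := Γ^i_{jk} + z δ^i_j δ^i_k`. -/
def GamZ (γ : Fin N → Fin N → (Fin N → ℂ) → ℂ) (z : ℂ) (i j k : Fin N) :
    (Fin N → ℂ) → ℂ :=
  fun u => Gam γ i j k u + (if i = j ∧ i = k then z else 0)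

section Helpers
variable {γ : Fin N → Fin N → (Fin N → ℂ) → ℂ} {i j k : Fin N} {u : Fin N → ℂ}

lemma Gam_iii : Gam γ i i i = fun u => -∑ l ∈ Finset.univ.erase i, γ i l u := by
  simp [Gam]
lemma Gam_iik (h : i ≠ k) : Gam γ i i k = γ i k := by
  simp [Gam, h]
lemma Gam_iji (h : i ≠ j) : Gam γ i j i = γ i j := by
  simp [Gam, h, Ne.symm h]
lemma Gam_ijj (h : i ≠ j) : Gam γ i j j = fun u => -(γ i j u) := by
  simp [Gam, h]
lemma Gam_distinct (h1 : i ≠ j) (h2 : i ≠ k) (h3 : j ≠ k) : Gam γ i j k = 0 := by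
  simp [Gam, h1, h2, h3]
lemma Gam_iii_apply : Gam γ i i i u = -∑ l ∈ Finset.univ.erase i, γ i l u := by
  simp [Gam]
lemma Gam_iik_apply (h : i ≠ k) : Gam γ i i k u = γ i k u := by
  simp [Gam, h]
lemma Gam_iji_apply (h : i ≠ j) : Gam γ i j i u = γ i j u := by
  simp [Gam, h, Ne.symm h]
lemma Gam_ijj_apply (h : i ≠ j) : Gam γ i j j u = -(γ i j u) := by
  simp [Gam, h]
lemma Gam_distinct_apply (h1 : i ≠ j) (h2 : i ≠ k) (h3 : j ≠ k) : Gam γ i j k u = 0 := by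
  simp [Gam, h1, h2, h3]
lemma sum_split_two {M : Type*} [AddCommMonoid M] {a b : Fin N} (h : b ≠ a) (f : Fin N → M) :
    ∑ m, f m = f a + (f b + ∑ m ∈ (Finset.univ.erase a).erase b, f m) := by
  rw [Finset.add_sum_erase _ f (Finset.mem_erase.2 ⟨h, Finset.mem_univ b⟩),
    Finset.add_sum_erase _ f (Finset.mem_univ a)]
lemma sum_split_three {M : Type*} [AddCommMonoid M] {a b c : Fin N} (hba : b ≠ a)
    (hca : c ≠ a) (hcb : c ≠ b) (f : Fin N → M) :
    ∑ m, f m = f a + (f b + (f c + ∑ m ∈ ((Finset.univ.erase a).erase b).erase c, f m)) := by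
  rw [Finset.add_sum_erase _ f
      (Finset.mem_erase.2 ⟨hcb, Finset.mem_erase.2 ⟨hca, Finset.mem_univ c⟩⟩),
    Finset.add_sum_erase _ f (Finset.mem_erase.2 ⟨hba, Finset.mem_univ b⟩),
    Finset.add_sum_erase _ f (Finset.mem_univ a)]
lemma pder_zero (u : Fin N → ℂ) : pder k (0 : (Fin N → ℂ) → ℂ) u = 0 := by
  have : (0 : (Fin N → ℂ) → ℂ) = fun _ => (0 : ℂ) := rfl
  simp [pder, this, fderiv_const]
lemma pder_neg (f : (Fin N → ℂ) → ℂ) (u : Fin N → ℂ) :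
    pder k (fun u => -(f u)) u = -(pder k f u) := by
  simp [pder, fderiv_neg]
lemma pder_neg_sum {u : Fin N → ℂ}
    (hd : ∀ l ∈ Finset.univ.erase i, DifferentiableAt ℂ (γ i l) u) :
    pder k (fun u => -∑ l ∈ Finset.univ.erase i, γ i l u) u
      = -∑ l ∈ Finset.univ.erase i, pder k (γ i l) u := by
  simp only [pder, fderiv_fun_neg, fderiv_fun_sum hd]
  simp


lemma Gam_symm {γ : Fin N → Fin N → (Fin N → ℂ) → ℂ} (i j k : Fin N) :
    Gam γ i j k = Gam γ i k j := by
  by_cases hij : i = j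
  · by_cases hik : i = k
    · subst hij; subst hik; rfl
    · subst hij; rw [Gam_iik hik, Gam_iji hik]
  · by_cases hik : i = k
    · subst hik; rw [Gam_iji hij, Gam_iik hij]
    · by_cases hjk : j = k
      · subst hjk; rfl
      · rw [Gam_distinct hij hik hjk, Gam_distinct hik hij (Ne.symm hjk)]

lemma GamZ_of_ne {γ : Fin N → Fin N → (Fin N → ℂ) → ℂ} {i j k : Fin N} (z : ℂ)
    (h : ¬(i = j ∧ i = k)) (u : Fin N → ℂ) : GamZ γ z i j k u = Gam γ i j k u := by
  simp [GamZ, h]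

lemma GamZ_eq {γ : Fin N → Fin N → (Fin N → ℂ) → ℂ} {i j k : Fin N} (z : ℂ)
    (u : Fin N → ℂ) :
    GamZ γ z i j k u = Gam γ i j k u + (if i = j ∧ i = k then z else 0) := rfl

lemma pder_GamZ {γ : Fin N → Fin N → (Fin N → ℂ) → ℂ} {i j k : Fin N} (z : ℂ) (l : Fin N)
    (u : Fin N → ℂ) : pder l (GamZ γ z i j k) u = pder l (Gam γ i j k) u := by
  unfold pder GamZ
  rw [fderiv_add_const]

lemma eps_cancel {γ : Fin N → Fin N → (Fin N → ℂ) → ℂ} {i j k l : Fin N} (hij : i ≠ j)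
    (z : ℂ) (u : Fin N → ℂ) :
    (if i = k then z else 0) * Gam γ i l j u - (if i = l then z else 0) * Gam γ i k j u
      + ((if j = l then z else 0) * Gam γ i k j u
         - (if j = k then z else 0) * Gam γ i l j u) = 0 := by
  by_cases hik : i = k
  · by_cases hjk : j = k
    · exact absurd (hik.trans hjk.symm) hij
    · by_cases hil : i = l
      · by_cases hjl : j = l
        · exact absurd (hil.trans hjl.symm) hij
        · subst hik; subst hil; simp [hjl, hjk]
      · by_cases hjl : j = l
        · subst hik; subst hjl
          rw [Gam_ijj_apply hij, Gam_iik_apply hij]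
          simp [hil, hjk]
        · subst hik
          rw [Gam_distinct_apply hil hij (fun h => hjl h.symm)]
          simp [hil, hjl, hjk]
  · by_cases hil : i = l
    · by_cases hjl : j = l
      · exact absurd (hil.trans hjl.symm) hij
      · by_cases hjk : j = k
        · subst hil; subst hjk
          rw [Gam_ijj_apply hij, Gam_iik_apply hij]
          simp [hik, hjl]
        · subst hil
          rw [Gam_distinct_apply hik hij (fun h => hjk h.symm)]
          simp [hik, hjl, hjk]
    · by_cases hjl : j = l
      · by_cases hjk : j = k
        · subst hjl; subst hjk
          simp [hik, hil]
        · subst hjl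
          rw [Gam_distinct_apply hik hij (fun h => hjk h.symm)]
          simp [hik, hil, hjk]
      · by_cases hjk : j = k
        · subst hjk
          rw [Gam_distinct_apply hil hij (fun h => hjl h.symm)]
          simp [hik, hil, hjl]
        · simp [hik, hil, hjl, hjk]

lemma gamZ_sum {γ : Fin N → Fin N → (Fin N → ℂ) → ℂ} (z : ℂ) (i j k l : Fin N)
    (u : Fin N → ℂ) :
    ∑ m, (GamZ γ z i k m u * GamZ γ z m l j u - GamZ γ z i l m u * GamZ γ z m k j u)
      = ∑ m, (Gam γ i k m u * Gam γ m l j u - Gam γ i l m u * Gam γ m k j u) := by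
  rw [← sub_eq_zero, ← Finset.sum_sub_distrib]
  by_cases hij : i = j
  · subst hij
    rw [← Finset.add_sum_erase _ _ (Finset.mem_univ i), Finset.sum_eq_zero, add_zero]
    · ring
    · intro m hm
      have hmi : m ≠ i := (Finset.mem_erase.1 hm).1
      rw [GamZ_of_ne z (fun h => hmi h.2.symm), GamZ_of_ne z (fun h => hmi h.2.symm),
        GamZ_of_ne z (fun h => hmi h.2), GamZ_of_ne z (fun h => hmi h.2), sub_self]
  · rw [sum_split_two (Ne.symm hij), Finset.sum_eq_zero, add_zero]
    · rw [GamZ_eq (j := k) (k := i) z u, GamZ_eq (j := l) (k := i) z u,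
        GamZ_of_ne (j := l) (k := j) z (fun h => hij h.2) u,
        GamZ_of_ne (j := k) (k := j) z (fun h => hij h.2) u,
        GamZ_eq (i := j) (j := l) (k := j) z u, GamZ_eq (i := j) (j := k) (k := j) z u]
      simp only [and_true, eq_self_iff_true]
      linear_combination (eps_cancel (γ := γ) (k := k) (l := l) hij z u)
    · intro m hm
      have hmj : m ≠ j := (Finset.mem_erase.1 hm).1
      have hmi : m ≠ i := (Finset.mem_erase.1 (Finset.mem_erase.1 hm).2).1
      rw [GamZ_of_ne z (fun h => hmi.symm h.2), GamZ_of_ne z (fun h => hmi.symm h.2),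
        GamZ_of_ne z (fun h => hmj h.2), GamZ_of_ne z (fun h => hmj h.2), sub_self]

lemma flatGam {U : Set (Fin N → ℂ)} (hU : IsOpen U)
    {γ : Fin N → Fin N → (Fin N → ℂ) → ℂ}
    (hhol : ∀ i j : Fin N, i ≠ j → DifferentiableOn ℂ (γ i j) U)
    (hstar : StarSystem U γ) :
    ∀ (i j k l : Fin N), ∀ u ∈ U,
      pder k (Gam γ i l j) u - pder l (Gam γ i k j) u
        + ∑ m, (Gam γ i k m u * Gam γ m l j u - Gam γ i l m u * Gam γ m k j u) = 0 := by
  obtain ⟨hp1, hp2⟩ := hstar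
  have hanti : ∀ (i j k l : Fin N) (u : Fin N → ℂ),
      pder k (Gam γ i l j) u - pder l (Gam γ i k j) u
        + ∑ m, (Gam γ i k m u * Gam γ m l j u - Gam γ i l m u * Gam γ m k j u)
      = -(pder l (Gam γ i k j) u - pder k (Gam γ i l j) u
        + ∑ m, (Gam γ i l m u * Gam γ m k j u - Gam γ i k m u * Gam γ m l j u)) := by
    intro i j k l u
    rw [neg_add, ← Finset.sum_neg_distrib]
    simp only [neg_sub]
  -- B2 : k = i, j = i
  have hB2 : ∀ (i l : Fin N), i ≠ l → ∀ u ∈ U,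
      pder i (Gam γ i l i) u - pder l (Gam γ i i i) u
        + ∑ m, (Gam γ i i m u * Gam γ m l i u - Gam γ i l m u * Gam γ m i i u) = 0 := by
    intro i l hil u hu
    have hd : ∀ a b : Fin N, a ≠ b → DifferentiableAt ℂ (γ a b) u := fun a b hab =>
      (hhol a b hab).differentiableAt (hU.mem_nhds hu)
    have hsum : ∑ m, (Gam γ i i m u * Gam γ m l i u - Gam γ i l m u * Gam γ m i i u) = 0 := by
      rw [sum_split_two (Ne.symm hil)]
      have hrest : ∀ m ∈ (Finset.univ.erase i).erase l,
          Gam γ i i m u * Gam γ m l i u - Gam γ i l m u * Gam γ m i i u = 0 := by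
        intro m hm
        have hml : m ≠ l := (Finset.mem_erase.1 hm).1
        have hmi : m ≠ i := (Finset.mem_erase.1 (Finset.mem_erase.1 hm).2).1
        rw [Gam_distinct_apply hml hmi (Ne.symm hil),
          Gam_distinct_apply hil (Ne.symm hmi) (fun h => hml h.symm)]
        ring
      rw [Finset.sum_eq_zero hrest, Gam_iik_apply hil, Gam_iik_apply (Ne.symm hil),
        Gam_ijj_apply hil, Gam_ijj_apply (Ne.symm hil)]
      ring
    rw [hsum, Gam_iji hil, Gam_iii,
      pder_neg_sum (fun p hp => hd i p (Ne.symm (Finset.mem_erase.1 hp).1))]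
    have hsplit : ∑ p ∈ Finset.univ.erase i, pder l (γ i p) u
        = pder l (γ i l) u + ∑ p ∈ (Finset.univ.erase i).erase l, pder l (γ i p) u :=
      (Finset.add_sum_erase _ _ (Finset.mem_erase.2 ⟨Ne.symm hil, Finset.mem_univ l⟩)).symm
    have hcongr : ∑ p ∈ (Finset.univ.erase i).erase l, pder l (γ i p) u
        = ∑ p ∈ (Finset.univ.erase i).erase l, pder p (γ i l) u := by
      refine Finset.sum_congr rfl (fun p hp => ?_)
      have hpl : p ≠ l := (Finset.mem_erase.1 hp).1
      have hpi : p ≠ i := (Finset.mem_erase.1 (Finset.mem_erase.1 hp).2).1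
      rw [hp1 i p l (Ne.symm hpi) hpl hil u hu,
        hp1 i l p hil (Ne.symm hpl) (Ne.symm hpi) u hu]
      ring
    rw [hsplit, hcongr]
    have htot := hp2 i l hil u hu
    rw [sum_split_two (Ne.symm hil)] at htot
    linear_combination htot
  -- B3 : k = i, j = l
  have hB3 : ∀ (i l : Fin N), i ≠ l → ∀ u ∈ U,
      pder i (Gam γ i l l) u - pder l (Gam γ i i l) u
        + ∑ m, (Gam γ i i m u * Gam γ m l l u - Gam γ i l m u * Gam γ m i l u) = 0 := by
    intro i l hil u hu
    have hd : ∀ a b : Fin N, a ≠ b → DifferentiableAt ℂ (γ a b) u := fun a b hab =>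
      (hhol a b hab).differentiableAt (hU.mem_nhds hu)
    have hsum : ∑ m, (Gam γ i i m u * Gam γ m l l u - Gam γ i l m u * Gam γ m i l u)
        = (Gam γ i i i u * Gam γ i l l u - Gam γ i l i u * Gam γ i i l u)
          + ((Gam γ i i l u * Gam γ l l l u - Gam γ i l l u * Gam γ l i l u)
            + ∑ m ∈ (Finset.univ.erase i).erase l,
                (Gam γ i i m u * Gam γ m l l u - Gam γ i l m u * Gam γ m i l u)) :=
      sum_split_two (Ne.symm hil) _
    have hrest : ∑ m ∈ (Finset.univ.erase i).erase l,
          (Gam γ i i m u * Gam γ m l l u - Gam γ i l m u * Gam γ m i l u)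
        = ∑ m ∈ (Finset.univ.erase i).erase l, -(γ i m u * γ m l u) := by
      refine Finset.sum_congr rfl (fun m hm => ?_)
      have hml : m ≠ l := (Finset.mem_erase.1 hm).1
      have hmi : m ≠ i := (Finset.mem_erase.1 (Finset.mem_erase.1 hm).2).1
      rw [Gam_iik_apply (Ne.symm hmi), Gam_ijj_apply hml,
        Gam_distinct_apply hil (Ne.symm hmi) (fun h => hml h.symm),
        Gam_distinct_apply hmi hml hil]
      ring
    rw [hsum, hrest, Finset.sum_neg_distrib, Gam_iii_apply, Gam_iii_apply,
      Gam_ijj_apply hil, Gam_iji_apply hil, Gam_iik_apply hil,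
      Gam_iji_apply (Ne.symm hil)]
    rw [Gam_ijj hil, pder_neg, Gam_iik hil]
    have e1 : ∑ p ∈ Finset.univ.erase i, γ i p u
        = γ i l u + ∑ p ∈ (Finset.univ.erase i).erase l, γ i p u :=
      (Finset.add_sum_erase _ _ (Finset.mem_erase.2 ⟨Ne.symm hil, Finset.mem_univ l⟩)).symm
    have e2 : ∑ p ∈ Finset.univ.erase l, γ l p u
        = γ l i u + ∑ p ∈ (Finset.univ.erase l).erase i, γ l p u :=
      (Finset.add_sum_erase _ _ (Finset.mem_erase.2 ⟨hil, Finset.mem_univ i⟩)).symm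
    have e2' : (Finset.univ.erase l).erase i = (Finset.univ.erase i).erase l :=
      Finset.erase_right_comm
    rw [e1, e2, e2']
    have htot := hp2 i l hil u hu
    rw [sum_split_two (Ne.symm hil)] at htot
    have hc : ∑ p ∈ (Finset.univ.erase i).erase l, pder p (γ i l) u
        = -(γ i l u * ∑ p ∈ (Finset.univ.erase i).erase l, γ i p u)
          + γ i l u * ∑ p ∈ (Finset.univ.erase i).erase l, γ l p u
          + ∑ p ∈ (Finset.univ.erase i).erase l, γ i p u * γ p l u := by
      have hstep : ∑ p ∈ (Finset.univ.erase i).erase l, pder p (γ i l) u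
          = ∑ p ∈ (Finset.univ.erase i).erase l,
              (-(γ i l u * γ i p u) + γ i l u * γ l p u + γ i p u * γ p l u) := by
        refine Finset.sum_congr rfl (fun p hp => ?_)
        have hpl : p ≠ l := (Finset.mem_erase.1 hp).1
        have hpi : p ≠ i := (Finset.mem_erase.1 (Finset.mem_erase.1 hp).2).1
        rw [hp1 i l p hil (Ne.symm hpl) (Ne.symm hpi) u hu]
      rw [hstep, Finset.sum_add_distrib, Finset.sum_add_distrib, Finset.sum_neg_distrib,
        ← Finset.mul_sum, ← Finset.mul_sum]
    linear_combination hc - htot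
  -- B1 : k = i, j ∉ {i, l}
  have hB1 : ∀ (i l j : Fin N), i ≠ l → j ≠ i → j ≠ l → ∀ u ∈ U,
      pder i (Gam γ i l j) u - pder l (Gam γ i i j) u
        + ∑ m, (Gam γ i i m u * Gam γ m l j u - Gam γ i l m u * Gam γ m i j u) = 0 := by
    intro i l j hil hji hjl u hu
    have hsum : ∑ m, (Gam γ i i m u * Gam γ m l j u - Gam γ i l m u * Gam γ m i j u)
        = (Gam γ i i i u * Gam γ i l j u - Gam γ i l i u * Gam γ i i j u)
          + ((Gam γ i i l u * Gam γ l l j u - Gam γ i l l u * Gam γ l i j u)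
            + ((Gam γ i i j u * Gam γ j l j u - Gam γ i l j u * Gam γ j i j u)
              + ∑ m ∈ ((Finset.univ.erase i).erase l).erase j,
                  (Gam γ i i m u * Gam γ m l j u - Gam γ i l m u * Gam γ m i j u))) :=
      sum_split_three (Ne.symm hil) hji hjl _
    have hrest : ∀ m ∈ ((Finset.univ.erase i).erase l).erase j,
        Gam γ i i m u * Gam γ m l j u - Gam γ i l m u * Gam γ m i j u = 0 := by
      intro m hm
      have hmj : m ≠ j := (Finset.mem_erase.1 hm).1
      have hml : m ≠ l := (Finset.mem_erase.1 (Finset.mem_erase.1 hm).2).1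
      have hmi : m ≠ i :=
        (Finset.mem_erase.1 (Finset.mem_erase.1 (Finset.mem_erase.1 hm).2).2).1
      rw [Gam_distinct_apply hml hmj (Ne.symm hjl),
        Gam_distinct_apply hil (Ne.symm hmi) (fun h => hml h.symm)]
      ring
    rw [hsum, Finset.sum_eq_zero hrest,
      Gam_distinct_apply hil (Ne.symm hji) (Ne.symm hjl),
      Gam_iji_apply hil, Gam_iik_apply (Ne.symm hji), Gam_iik_apply hil,
      Gam_iik_apply (Ne.symm hjl), Gam_ijj_apply hil,
      Gam_distinct_apply (Ne.symm hil) (Ne.symm hjl) (Ne.symm hji),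
      Gam_iji_apply hjl, Gam_iji_apply hji]
    rw [Gam_distinct hil (Ne.symm hji) (Ne.symm hjl), pder_zero, Gam_iik (Ne.symm hji)]
    rw [hp1 i j l (Ne.symm hji) hjl hil u hu]
    ring
  -- A3 : i, k, l pairwise distinct, j = k
  have hA3 : ∀ (i k l : Fin N), i ≠ k → i ≠ l → k ≠ l → ∀ u ∈ U,
      pder k (Gam γ i l k) u - pder l (Gam γ i k k) u
        + ∑ m, (Gam γ i k m u * Gam γ m l k u - Gam γ i l m u * Gam γ m k k u) = 0 := by
    intro i k l hik hil hkl u hu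
    have hsum : ∑ m, (Gam γ i k m u * Gam γ m l k u - Gam γ i l m u * Gam γ m k k u)
        = (Gam γ i k i u * Gam γ i l k u - Gam γ i l i u * Gam γ i k k u)
          + ((Gam γ i k k u * Gam γ k l k u - Gam γ i l k u * Gam γ k k k u)
            + ((Gam γ i k l u * Gam γ l l k u - Gam γ i l l u * Gam γ l k k u)
              + ∑ m ∈ ((Finset.univ.erase i).erase k).erase l,
                  (Gam γ i k m u * Gam γ m l k u - Gam γ i l m u * Gam γ m k k u))) :=
      sum_split_three (Ne.symm hik) (Ne.symm hil) (Ne.symm hkl) _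
    have hrest : ∀ m ∈ ((Finset.univ.erase i).erase k).erase l,
        Gam γ i k m u * Gam γ m l k u - Gam γ i l m u * Gam γ m k k u = 0 := by
      intro m hm
      have hml : m ≠ l := (Finset.mem_erase.1 hm).1
      have hmk : m ≠ k := (Finset.mem_erase.1 (Finset.mem_erase.1 hm).2).1
      have hmi : m ≠ i :=
        (Finset.mem_erase.1 (Finset.mem_erase.1 (Finset.mem_erase.1 hm).2).2).1
      rw [Gam_distinct_apply hik (Ne.symm hmi) (fun h => hmk h.symm),
        Gam_distinct_apply hil (Ne.symm hmi) (fun h => hml h.symm)]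
      ring
    rw [hsum, Finset.sum_eq_zero hrest,
      Gam_distinct_apply hil hik (Ne.symm hkl),
      Gam_iji_apply hik, Gam_iji_apply hil, Gam_ijj_apply hik,
      Gam_iji_apply hkl, Gam_distinct_apply hik hil hkl,
      Gam_iik_apply (Ne.symm hkl), Gam_ijj_apply hil, Gam_ijj_apply (Ne.symm hkl)]
    rw [Gam_distinct hil hik (Ne.symm hkl), pder_zero, Gam_ijj hik, pder_neg]
    rw [hp1 i k l hik hkl hil u hu]
    ring
  -- A : i, k, l pairwise distinct
  have hA : ∀ (i k l j : Fin N), i ≠ k → i ≠ l → k ≠ l → ∀ u ∈ U,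
      pder k (Gam γ i l j) u - pder l (Gam γ i k j) u
        + ∑ m, (Gam γ i k m u * Gam γ m l j u - Gam γ i l m u * Gam γ m k j u) = 0 := by
    intro i k l j hik hil hkl u hu
    by_cases hij : i = j
    · subst hij
      have hsum : ∑ m, (Gam γ i k m u * Gam γ m l i u - Gam γ i l m u * Gam γ m k i u) = 0 := by
        refine Finset.sum_eq_zero (fun m _ => ?_)
        by_cases hmi : m = i
        · subst hmi; ring
        · by_cases hmk : m = k
          · subst hmk
            rw [Gam_distinct_apply hkl (Ne.symm hik) (Ne.symm hil),
              Gam_distinct_apply hil hik (Ne.symm hkl)]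
            ring
          · by_cases hml : m = l
            · subst hml
              rw [Gam_distinct_apply hik hil hkl,
                Gam_distinct_apply (Ne.symm hkl) (Ne.symm hil) (Ne.symm hik)]
              ring
            · rw [Gam_distinct_apply hik (fun h => hmi h.symm) (fun h => hmk h.symm),
                Gam_distinct_apply hil (fun h => hmi h.symm) (fun h => hml h.symm)]
              ring
      rw [hsum, Gam_iji hil, Gam_iji hik,
        hp1 i l k hil (Ne.symm hkl) hik u hu, hp1 i k l hik hkl hil u hu]
      ring
    · by_cases hkj : k = j
      · subst hkj; exact hA3 i k l hik hil hkl u hu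
      · by_cases hlj : l = j
        · subst hlj
          rw [hanti, hA3 i l k hil hik (Ne.symm hkl) u hu, neg_zero]
        · -- A1 : all distinct
          have hsum : ∑ m, (Gam γ i k m u * Gam γ m l j u - Gam γ i l m u * Gam γ m k j u)
              = 0 := by
            refine Finset.sum_eq_zero (fun m _ => ?_)
            by_cases hmi : m = i
            · subst hmi
              rw [Gam_distinct_apply hil hij hlj,
                Gam_distinct_apply hik hij hkj]
              ring
            · by_cases hmk : m = k
              · subst hmk
                rw [Gam_distinct_apply hkl hkj hlj,
                  Gam_distinct_apply hil hik (Ne.symm hkl)]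
                ring
              · by_cases hml : m = l
                · subst hml
                  rw [Gam_distinct_apply hik hil hkl,
                    Gam_distinct_apply (Ne.symm hkl) hlj hkj]
                  ring
                · rw [Gam_distinct_apply hik (fun h => hmi h.symm) (fun h => hmk h.symm),
                    Gam_distinct_apply hil (fun h => hmi h.symm) (fun h => hml h.symm)]
                  ring
          rw [hsum, Gam_distinct hil hij hlj,
            Gam_distinct hik hij hkj,
            pder_zero, pder_zero]
          ring
  -- assemble
  intro i j k l u hu
  by_cases hkl : k = l
  · subst hkl
    rw [sub_self, zero_add, Finset.sum_eq_zero]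
    intro m _; rw [sub_self]
  · by_cases hik : i = k
    · subst hik
      by_cases hij : i = j
      · subst hij; exact hB2 i l hkl u hu
      · by_cases hlj : l = j
        · subst hlj; exact hB3 i l hkl u hu
        · exact hB1 i l j hkl (fun h => hij h.symm) (fun h => hlj h.symm) u hu
    · by_cases hil : i = l
      · subst hil
        rw [hanti]
        by_cases hij : i = j
        · subst hij; rw [hB2 i k (fun h => hik h) u hu, neg_zero]
        · by_cases hkj : k = j
          · subst hkj; rw [hB3 i k (fun h => hik h) u hu, neg_zero]
          · rw [hB1 i k j (fun h => hik h) (fun h => hij h.symm) (fun h => hkj h.symm) u hu,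
              neg_zero]
      · exact hA i k l j hik hil hkl u hu

end Helpers

/-- If `γ̃` solves (★) on `U`, then for every `z ∈ ℂ` the connection with
Christoffel symbols `Γ(z)^i_{jk} = Γ^i_{jk} + z δ^i_j δ^i_k` is torsionless and flat, and the
unit vector field `e = Σ_i ∂/∂u^i` is parallel. -/


theorem statement2 {N : ℕ} (hN : 2 ≤ N) (U : Set (Fin N → ℂ)) (hU : IsOpen U)
    (γ : Fin N → Fin N → (Fin N → ℂ) → ℂ)
    (hhol : ∀ i j : Fin N, i ≠ j → DifferentiableOn ℂ (γ i j) U)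
    (hstar : StarSystem U γ) :
    -- (i) torsionlessness
    (∀ (z : ℂ) (i j k : Fin N), ∀ u ∈ U, GamZ γ z i j k u = GamZ γ z i k j u) ∧
    -- (ii) flatness
    (∀ (z : ℂ) (i j k l : Fin N), ∀ u ∈ U,
        pder k (GamZ γ z i l j) u - pder l (GamZ γ z i k j) u
          + ∑ m, (GamZ γ z i k m u * GamZ γ z m l j u - GamZ γ z i l m u * GamZ γ z m k j u)
        = 0) ∧
    -- (iii) the unit vector field is parallel: Σ_j Γ^i_{kj} = 0
    (∀ (i k : Fin N), ∀ u ∈ U, ∑ j, Gam γ i k j u = 0) := by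
  obtain ⟨hp1, hp2⟩ := hstar
  refine ⟨?_, ?_, ?_⟩
  · -- (i) torsionlessness
    intro z i j k u _
    rw [GamZ_eq, GamZ_eq, Gam_symm i j k,
      if_congr (and_comm (a := i = j) (b := i = k)) rfl rfl]
  · -- (ii) flatness
    intro z i j k l u hu
    rw [pder_GamZ, pder_GamZ, gamZ_sum]
    exact flatGam hU hhol ⟨hp1, hp2⟩ i j k l u hu
  · -- (iii) the unit vector field is parallel
    intro i k u _
    by_cases hik : i = k
    · subst hik
      rw [← Finset.add_sum_erase _ _ (Finset.mem_univ i), Gam_iii_apply,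
        Finset.sum_congr rfl
          (fun j hj => Gam_iik_apply (Ne.symm (Finset.mem_erase.1 hj).1))]
      ring
    · rw [sum_split_two (Ne.symm hik), Gam_iji_apply hik, Gam_ijj_apply hik,
        Finset.sum_eq_zero (fun m hm => Gam_distinct_apply hik
          (Ne.symm (Finset.mem_erase.1 (Finset.mem_erase.1 hm).2).1)
          (Ne.symm (Finset.mem_erase.1 hm).1))]
      ring


end
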